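/- Let R be an associative unital ℚ-algebra containing elements t and ∂ satisfying ∂·t − t·∂ = 1, and let M be a left R-module. Set M₀ := {m ∈ M : t·m = 0}. If M is generated as an R-module by finitely many elements e₁, …, e_n such that each eᵢ is annihilated by some power of t (i.e., for each i there is jᵢ ≥ 1 with t^{jᵢ}·eᵢ = 0), then M equals the R-submodule generated by M₀, that is, R·M₀ = M. -/
import Mathlib

private lemma weyl_pow {R : Type*} [Ring R] (t d : R) (h : d * t - t * d = 1) :
    ∀ k : ℕ, t ^ (k + 1) * d = d * t ^ (k + 1) - ((k : R) + 1) * t ^ k := by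
  have h' : t * d = d * t - 1 := by
    rw [eq_sub_iff_add_eq, ← h]; abel
  intro k
  induction k with
  | zero => simpa using h'
  | succ k hk =>
      have h2 : t ^ (k + 2) * d = t * (t ^ (k + 1) * d) := by
        rw [← mul_assoc, ← pow_succ']
      have ck : Commute t ((k : R) + 1) :=
        ((Nat.cast_commute k t).add_left (Commute.one_left t)).symm
      rw [h2, hk, mul_sub, ← mul_assoc t ((k:R)+1), ck.eq, ← mul_assoc t d, h']
      rw [mul_assoc ((k:R)+1) t, ← pow_succ', sub_mul, one_mul, mul_assoc d, ← pow_succ']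
      push_cast
      noncomm_ring

private lemma mem_span_ker_of_pow_smul_eq_zero
    {R : Type*} [Ring R] [Algebra ℚ R] (t d : R) (h : d * t - t * d = 1)
    {M : Type*} [AddCommGroup M] [Module R M] :
    ∀ (j : ℕ) (m : M), t ^ j • m = 0 → m ∈ Submodule.span R {m : M | t • m = 0} := by
  set N := Submodule.span R {m : M | t • m = 0} with hN
  intro j
  induction j with
  | zero => intro m hm; simp only [pow_zero, one_smul] at hm; simp [hm]
  | succ j ih =>
      intro m hm
      match j, ih with
      | 0, _ =>
          exact Submodule.subset_span (by simpa using hm)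
      | (k+1 : ℕ), ih =>
          set j : ℕ := k + 1 with hj
          -- t • m is killed by t ^ j
          have h1 : t ^ j • (t • m) = 0 := by
            rw [smul_smul, ← pow_succ]; exact hm
          have htm : t • m ∈ N := ih _ h1
          have hdtm : (d * t) • m ∈ N := by
            rw [mul_smul]; exact N.smul_mem d htm
          set c : R := algebraMap ℚ R (((j:ℚ)+1)⁻¹) with hc
          have hcomm : ∀ r : R, c * r = r * c := fun r => (Algebra.commutes _ r)
          -- the corrected element lies in ker t^j
          have key : t ^ j • (m + (c * (t * d)) • m) = 0 := by
            have e1 : t ^ j * (c * (t * d)) = c * (t ^ (j+1) * d) := by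
              rw [← mul_assoc, ← hcomm, mul_assoc, ← mul_assoc (t^j) t d, ← pow_succ]
            have e2 : c * ((j : R) + 1) = 1 := by
              rw [hc, ← map_natCast (algebraMap ℚ R) j, ← map_one (algebraMap ℚ R),
                ← map_add, ← map_mul, inv_mul_cancel₀ (by positivity), map_one]
            rw [smul_add, smul_smul, e1, weyl_pow t d h j, mul_sub, sub_smul,
              ← mul_assoc c d, mul_smul (c*d) (t^(j+1)), hm, smul_zero,
              ← mul_assoc c, e2, one_mul]
            abel
          have hm' : m + (c * (t * d)) • m ∈ N := ih _ key
          -- rewrite the correction term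
          have e3 : (c * (t * d)) • m = c • ((d * t) • m) - c • m := by
            have : t * d = d * t - 1 := by rw [eq_sub_iff_add_eq, ← h]; abel
            rw [this, mul_sub, mul_one, sub_smul, mul_smul]
          have e4 : ((1 : R) - c) • m = (m + (c * (t * d)) • m) - c • ((d * t) • m) := by
            rw [e3, sub_smul, one_smul]; abel
          have h5 : ((1 : R) - c) • m ∈ N := by
            rw [e4]; exact N.sub_mem hm' (N.smul_mem c hdtm)
          have hq : (1 : ℚ) - ((j:ℚ)+1)⁻¹ ≠ 0 := by
            have : ((j:ℚ)+1)⁻¹ < 1 := by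
              rw [inv_lt_one_iff₀]; right
              have : (1:ℚ) ≤ (j:ℚ) := by exact_mod_cast Nat.one_le_iff_ne_zero.2 (by omega)
              linarith
            linarith
          have e6 : (1 : R) - c = algebraMap ℚ R (1 - ((j:ℚ)+1)⁻¹) := by
            rw [map_sub, map_one, hc]
          have : m = (algebraMap ℚ R ((1 - ((j:ℚ)+1)⁻¹)⁻¹)) • (((1:R) - c) • m) := by
            rw [e6, smul_smul, ← map_mul, inv_mul_cancel₀ hq, map_one, one_smul]
          rw [this]
          exact N.smul_mem _ h5

/-- Let `R` be an associative unital `ℚ`-algebra with elements `t, ∂` satisfying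
`∂·t − t·∂ = 1`, and let `M` be a left `R`-module. If `M` is generated by finitely many
elements `e₁, …, e_n`, each annihilated by some power of `t`, then `M` is generated by
`M₀ = {m ∈ M : t·m = 0}`, i.e. `R·M₀ = M`. -/
theorem span_ker_eq_top_of_generators_pow_smul_eq_zero
    (R : Type*) [Ring R] [Algebra ℚ R] (t d : R) (h : d * t - t * d = 1)
    (M : Type*) [AddCommGroup M] [Module R M]
    (n : ℕ) (e : Fin n → M)
    (hgen : Submodule.span R (Set.range e) = ⊤)
    (hann : ∀ i : Fin n, ∃ j : ℕ, 1 ≤ j ∧ t ^ j • e i = 0) :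
    Submodule.span R {m : M | t • m = 0} = ⊤ := by
  refine le_antisymm le_top ?_
  rw [← hgen]
  rw [Submodule.span_le]
  rintro _ ⟨i, rfl⟩
  obtain ⟨j, -, hj⟩ := hann i
  exact mem_span_ker_of_pow_smul_eq_zero t d h j (e i) hj
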